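/- Let U be the Lucas sequence with parameters P, Q where Q = ±1. If a and b are coprime positive integers, then gcd(U_a, U_b) = 1. -/

import Mathlib

theorem lucas_coprime_indices_coprime_terms
    (P Q : ℤ) (hQ : Q = 1 ∨ Q = -1)
    (U : ℕ → ℤ) (h0 : U 0 = 0) (h1 : U 1 = 1)
    (hrec : ∀ n, U (n + 2) = P * U (n + 1) + Q * U n) :
    ∀ a b : ℕ, 1 ≤ a → 1 ≤ b → Nat.Coprime a b →
      Int.gcd (U a) (U b) = 1 := by
  have hQabs : Q.natAbs = 1 := by rcases hQ with h | h <;> simp [h]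
  -- gcd is invariant under adding a multiple of the second argument
  have aux : ∀ a b c : ℤ, Int.gcd (a + c * b) b = Int.gcd a b := by
    intro a b c
    apply Nat.dvd_antisymm <;> rw [← Int.natCast_dvd_natCast]
    · refine Int.dvd_coe_gcd ?_ (Int.gcd_dvd_right _ _)
      have h1' : ((a + c * b).gcd b : ℤ) ∣ a + c * b := Int.gcd_dvd_left _ _
      have h2' : ((a + c * b).gcd b : ℤ) ∣ c * b := (Int.gcd_dvd_right _ _).mul_left c
      have h3' := dvd_sub h1' h2'
      rwa [add_sub_cancel_right] at h3'
    · exact Int.dvd_coe_gcd (dvd_add (Int.gcd_dvd_left _ _) ((Int.gcd_dvd_right _ _).mul_left _))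
        (Int.gcd_dvd_right _ _)
  -- consecutive terms are coprime
  have hconsec : ∀ n, Int.gcd (U n) (U (n + 1)) = 1 := by
    intro n
    induction n with
    | zero => simp [h0, h1]
    | succ n ih =>
      have h2 : Int.gcd (U (n + 1)) (U (n + 2)) = Int.gcd (U (n + 1)) (Q * U n) := by
        rw [Int.gcd_comm, hrec n,
          show P * U (n + 1) + Q * U n = Q * U n + P * U (n + 1) by ring,
          aux, Int.gcd_comm]
      rw [h2, Int.gcd, Int.natAbs_mul, hQabs, one_mul, ← Int.gcd, Int.gcd_comm]
      exact ih
  -- addition formula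
  have hadd : ∀ n m, U (m + n + 1) = U (m + 1) * U (n + 1) + Q * U m * U n := by
    intro n
    have key : ∀ m, U (m + n + 1) = U (m + 1) * U (n + 1) + Q * U m * U n ∧
        U (m + 1 + n + 1) = U (m + 2) * U (n + 1) + Q * U (m + 1) * U n := by
      intro m
      induction m with
      | zero =>
        constructor
        · simp [h0, h1]
        · have h2 : U 2 = P := by have := hrec 0; simpa [h0, h1] using this
          have := hrec n
          simp only [show 0 + 1 + n + 1 = n + 2 by omega, this, h1, h2]
          ring
      | succ m ih =>
        refine ⟨ih.2, ?_⟩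
        rw [show m + 1 + 1 + n + 1 = m + n + 1 + 2 from by omega, hrec (m + n + 1),
          show m + n + 1 + 1 = m + 1 + n + 1 from by omega, ih.2, ih.1,
          hrec (m + 1), show m + 1 + 1 = m + 2 from by omega, hrec m]
        ring
    intro m; exact (key m).1
  -- reduction lemma
  have hred : ∀ m n, 1 ≤ n → Int.gcd (U (m + n)) (U n) = Int.gcd (U m) (U n) := by
    intro m n hn
    obtain ⟨k, rfl⟩ : ∃ k, n = k + 1 := ⟨n - 1, by omega⟩
    rw [show m + (k + 1) = m + k + 1 from by omega, hadd k m,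
      show U (m + 1) * U (k + 1) + Q * U m * U k = Q * U m * U k + (U (m+1) * U k) * 0
        + U (m + 1) * U (k + 1) from by ring]
    rw [show Q * U m * U k + U (m + 1) * U k * 0 + U (m + 1) * U (k + 1)
        = Q * U m * U k + U (m + 1) * U (k + 1) from by ring]
    rw [aux (Q * U m * U k) (U (k + 1)) (U (m + 1))]
    rw [Int.gcd, Int.natAbs_mul, Int.natAbs_mul, hQabs, one_mul]
    rw [Nat.Coprime.gcd_mul_right_cancel _ (hconsec k)]
    rfl
  -- main induction on a + b
  intro a b
  have main : ∀ N a b, a + b ≤ N → 1 ≤ a → 1 ≤ b → Nat.Coprime a b →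
      Int.gcd (U a) (U b) = 1 := by
    intro N
    induction N with
    | zero => intro a b h ha hb _; omega
    | succ N ih =>
      intro a b hab ha hb hcop
      rcases lt_trichotomy a b with h | h | h
      · have hb' : b = (b - a) + a := by omega
        have hcop' : a.Coprime (b - a) := by
          rw [hb'] at hcop
          exact (Nat.coprime_add_self_right).mp hcop
        rw [hb', Int.gcd_comm, hred _ _ ha, Int.gcd_comm]
        exact ih a (b - a) (by omega) ha (by omega) hcop'
      · have hb1 : b = 1 := by
          rw [h] at hcop
          simpa [Nat.Coprime, Nat.gcd_self] using hcop
        rw [h, hb1, h1]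
        simp
      · have ha' : a = (a - b) + b := by omega
        have hcop' : (a - b).Coprime b := by
          rw [ha'] at hcop
          exact (Nat.coprime_add_self_left).mp hcop
        rw [ha', hred _ _ hb]
        exact ih (a - b) b (by omega) (by omega) hb hcop'
  intro ha hb hcop
  exact main (a + b) a b le_rfl ha hb hcop
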